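/- There exists an infinite sequence (Rₙ)ₙ≥1 of simple graphs on a common countably infinite vertex set V such that for every n every edge of Rₙ is an edge of Rₙ₊₁, every Rₙ satisfies the extension property, and for every n the neighbourhood filter F_{Rₙ₊₁} is properly contained in F_{Rₙ}. -/

import Mathlib

/-- The neighbourhood filter of a graph: the filter generated by the open
neighbourhoods of the vertices. -/
def nbhdFilter {V : Type*} (Γ : SimpleGraph V) : Filter V :=
  Filter.generate {s : Set V | ∃ v : V, s = Γ.neighborSet v}

/-- A graph on a countably infinite vertex set has the extension property
(characterising the Rado graph) if for all disjoint finite sets `U`, `W` of vertices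
there is a vertex outside `U ∪ W` adjacent to everything in `U` and nothing in `W`. -/
def ExtensionProperty {V : Type*} (R : SimpleGraph V) : Prop :=
  ∀ U W : Finset V, Disjoint U W →
    ∃ z : V, z ∉ U ∧ z ∉ W ∧ (∀ u ∈ U, R.Adj z u) ∧ (∀ w ∈ W, ¬ R.Adj z w)

/-- Membership predicate for the growing neighbourhood of vertex `0`. -/
def AP (n z : ℕ) : Prop := 0 < z ∧ ¬ (2 ^ (n + 1) ∣ (Nat.log 2 z + 1))

/-- The chain of Rado graphs. -/
def Rn (n : ℕ) : SimpleGraph ℕ where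
  Adj i j := i ≠ j ∧ ((0 < i ∧ 0 < j ∧ Nat.testBit (max i j) (min i j)) ∨
    (i = 0 ∧ AP n j) ∨ (j = 0 ∧ AP n i))
  symm := by
    constructor
    rintro i j ⟨hne, h⟩
    refine ⟨hne.symm, ?_⟩
    rcases h with ⟨hi, hj, ht⟩ | ⟨h1, h2⟩ | ⟨h1, h2⟩
    · exact Or.inl ⟨hj, hi, by rwa [max_comm, min_comm]⟩
    · exact Or.inr (Or.inr ⟨h1, h2⟩)
    · exact Or.inr (Or.inl ⟨h1, h2⟩)
  loopless := ⟨fun i h => h.1 rfl⟩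

lemma geo_sum (a : ℕ) : ∑ u ∈ Finset.range a, 2 ^ u + 1 = 2 ^ a := by
  induction a with
  | zero => simp
  | succ n ih => rw [Finset.sum_range_succ, pow_succ]; omega

lemma sum_two_pow_lt {s : Finset ℕ} {a : ℕ} (h : ∀ x ∈ s, x < a) :
    ∑ u ∈ s, 2 ^ u < 2 ^ a := by
  have h1 : ∑ u ∈ s, 2 ^ u ≤ ∑ u ∈ Finset.range a, 2 ^ u :=
    Finset.sum_le_sum_of_subset (fun x hx => Finset.mem_range.2 (h x hx))
  have := geo_sum a
  omega

lemma testBit_sum_two_pow (s : Finset ℕ) (k : ℕ) :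
    ((∑ u ∈ s, 2 ^ u).testBit k = true) ↔ k ∈ s := by
  induction s using Finset.induction_on_max generalizing k with
  | empty => simp
  | insert a s ha ih =>
    have hns : a ∉ s := fun h => lt_irrefl a (ha a h)
    rw [Finset.sum_insert hns]
    have hlt : ∑ u ∈ s, 2 ^ u < 2 ^ a := sum_two_pow_lt ha
    rcases lt_trichotomy k a with hk | rfl | hk
    · rw [Nat.testBit_two_pow_add_gt hk, ih]
      simp only [Finset.mem_insert]
      constructor
      · exact Or.inr
      · rintro (rfl | h)
        · omega
        · exact h
    · rw [Nat.testBit_two_pow_add_eq, Nat.testBit_lt_two_pow hlt]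
      simp
    · have hbig : 2 ^ a + ∑ u ∈ s, 2 ^ u < 2 ^ k := by
        have h2 : 2 ^ (a + 1) ≤ 2 ^ k := Nat.pow_le_pow_right (by norm_num) hk
        rw [pow_succ] at h2
        omega
      rw [Nat.testBit_lt_two_pow hbig]
      simp only [Bool.false_eq_true, false_iff, Finset.mem_insert]
      rintro (rfl | h)
      · omega
      · exact absurd (ha k h) (by omega)

/-- The key witness lemma. -/
lemma key (n : ℕ) (U W : Finset ℕ) (hUW : Disjoint U W) (M : ℕ)
    (hM : ∀ x ∈ U ∪ W, x < M)
    (h0U : 0 ∈ U → ¬ (2 ^ (n + 1) ∣ (M + 1)))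
    (h0W : 0 ∈ W → (2 ^ (n + 1) ∣ (M + 1))) :
    ∃ z : ℕ, Nat.log 2 z = M ∧ 0 < z ∧ z ∉ U ∧ z ∉ W ∧
      (∀ u ∈ U, (Rn n).Adj z u) ∧ (∀ w ∈ W, ¬ (Rn n).Adj z w) := by
  classical
  set U₀ : Finset ℕ := U.erase 0 with hU₀
  have hU₀lt : ∀ x ∈ U₀, x < M := fun x hx =>
    hM x (Finset.mem_union_left _ (Finset.mem_of_mem_erase hx))
  have hMU₀ : M ∉ U₀ := fun h => lt_irrefl M (hU₀lt M h)
  set z : ℕ := ∑ u ∈ insert M U₀, 2 ^ u with hz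
  have hzval : z = 2 ^ M + ∑ u ∈ U₀, 2 ^ u := by rw [hz, Finset.sum_insert hMU₀]
  have hrem : ∑ u ∈ U₀, 2 ^ u < 2 ^ M := sum_two_pow_lt hU₀lt
  have hle : 2 ^ M ≤ z := by omega
  have hlt2 : z < 2 ^ (M + 1) := by rw [pow_succ]; omega
  have hlog : Nat.log 2 z = M := Nat.log_eq_of_pow_le_of_lt_pow hle hlt2
  have hbit : ∀ k, (z.testBit k = true) ↔ k ∈ insert M U₀ := fun k =>
    testBit_sum_two_pow _ k
  have hMz : M < z := lt_of_lt_of_le (Nat.lt_two_pow_self (n := M)) hle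
  have hzgt : ∀ x ∈ U ∪ W, x < z := fun x hx => lt_trans (hM x hx) hMz
  have hzpos : 0 < z := by have := Nat.one_le_two_pow (n := M); omega
  refine ⟨z, hlog, hzpos, ?_, ?_, ?_, ?_⟩
  · intro h; exact lt_irrefl z (hzgt z (Finset.mem_union_left _ h))
  · intro h; exact lt_irrefl z (hzgt z (Finset.mem_union_right _ h))
  · intro u hu
    have huz : u < z := hzgt u (Finset.mem_union_left _ hu)
    rcases Nat.eq_zero_or_pos u with rfl | hupos
    · exact ⟨by omega, Or.inr (Or.inr ⟨rfl, hzpos, by rw [hlog]; exact h0U hu⟩)⟩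
    · refine ⟨by omega, Or.inl ⟨hzpos, hupos, ?_⟩⟩
      rw [max_eq_left (le_of_lt huz), min_eq_right (le_of_lt huz)]
      exact (hbit u).2 (Finset.mem_insert_of_mem (Finset.mem_erase.2 ⟨by omega, hu⟩))
  · rintro w hw ⟨hne, h⟩
    have hwz : w < z := hzgt w (Finset.mem_union_right _ hw)
    have hwM : w < M := hM w (Finset.mem_union_right _ hw)
    rcases h with ⟨_, hwpos, ht⟩ | ⟨h1, _⟩ | ⟨h1, h2⟩
    · rw [max_eq_left (le_of_lt hwz), min_eq_right (le_of_lt hwz)] at ht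
      have := (hbit w).1 ht
      rcases Finset.mem_insert.1 this with rfl | hwU₀
      · omega
      · exact (Finset.disjoint_left.1 hUW (Finset.mem_of_mem_erase hwU₀)) hw
    · omega
    · subst h1
      obtain ⟨-, hnd⟩ := h2
      rw [hlog] at hnd
      exact hnd (h0W hw)

lemma rn_mono (n : ℕ) : Rn n ≤ Rn (n + 1) := by
  rintro i j ⟨hne, h⟩
  refine ⟨hne, ?_⟩
  have hAP : ∀ m, AP n m → AP (n + 1) m := by
    rintro m ⟨hm, hd⟩
    exact ⟨hm, fun hc => hd (dvd_trans (pow_dvd_pow 2 (by omega)) hc)⟩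
  rcases h with h | ⟨h1, h2⟩ | ⟨h1, h2⟩
  · exact Or.inl h
  · exact Or.inr (Or.inl ⟨h1, hAP _ h2⟩)
  · exact Or.inr (Or.inr ⟨h1, hAP _ h2⟩)

lemma rn_ext (n : ℕ) : ExtensionProperty (Rn n) := by
  classical
  intro U W hUW
  set B : ℕ := (U ∪ W).sup id with hB
  have hBlt : ∀ x ∈ U ∪ W, x ≤ B := fun x hx => Finset.le_sup (f := id) hx
  by_cases h0 : 0 ∈ U
  · -- need 2^(n+1) ∤ M+1
    set M : ℕ := 2 ^ (n + 1) * (B + 1) with hM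
    have h2 : 2 ≤ 2 ^ (n + 1) := Nat.one_lt_two_pow (by omega)
    have hMgt : ∀ x ∈ U ∪ W, x < M := by
      intro x hx
      have hx1 := hBlt x hx
      have hx2 : 2 * (B + 1) ≤ 2 ^ (n + 1) * (B + 1) := Nat.mul_le_mul_right _ h2
      omega
    have hnd : ¬ (2 ^ (n + 1) ∣ (M + 1)) := by
      intro hd
      have : (2 : ℕ) ^ (n + 1) ∣ 1 := (Nat.dvd_add_right (dvd_mul_right _ _)).1 hd
      have := Nat.le_of_dvd one_pos this
      omega
    have h0W : 0 ∉ W := fun hc => (Finset.disjoint_left.1 hUW h0) hc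
    obtain ⟨z, _, _, h3, h4, h5, h6⟩ := key n U W hUW M hMgt (fun _ => hnd)
      (fun hc => absurd hc h0W)
    exact ⟨z, h3, h4, h5, h6⟩
  · -- need 2^(n+1) ∣ M+1
    set M : ℕ := 2 ^ (n + 1) * (B + 1) - 1 with hM
    have h2 : 2 ≤ 2 ^ (n + 1) := Nat.one_lt_two_pow (by omega)
    have hM1 : M + 1 = 2 ^ (n + 1) * (B + 1) := by
      have : 0 < 2 ^ (n + 1) * (B + 1) := by positivity
      omega
    have hMgt : ∀ x ∈ U ∪ W, x < M := by
      intro x hx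
      have hx1 := hBlt x hx
      have hx2 : 2 * (B + 1) ≤ 2 ^ (n + 1) * (B + 1) := Nat.mul_le_mul_right _ h2
      omega
    obtain ⟨z, _, _, h3, h4, h5, h6⟩ := key n U W hUW M hMgt
      (fun hc => absurd hc h0) (fun _ => hM1 ▸ dvd_mul_right _ _)
    exact ⟨z, h3, h4, h5, h6⟩

lemma nbhd_anti {V : Type*} {R R' : SimpleGraph V} (h : R ≤ R') :
    ∀ s : Set V, s ∈ nbhdFilter R' → s ∈ nbhdFilter R := by
  intro s hs
  induction hs with
  | basic hb =>
    obtain ⟨v, rfl⟩ := hb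
    exact Filter.mem_of_superset (Filter.mem_generate_of_mem ⟨v, rfl⟩)
      (fun x hx => h hx)
  | univ => exact Filter.univ_mem
  | superset _ hsub ih => exact Filter.mem_of_superset ih hsub
  | inter _ _ ih1 ih2 => exact Filter.inter_mem ih1 ih2

/-- The old neighbourhood of `0` is not in the new neighbourhood filter. -/
lemma not_mem_new (n : ℕ) :
    (Rn n).neighborSet 0 ∉ nbhdFilter (Rn (n + 1)) := by
  classical
  intro hmem
  obtain ⟨t, hts, htf, hsub⟩ := Filter.mem_generate_iff.1 hmem
  -- choose a vertex for each set in t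
  have hch : ∀ s ∈ t, ∃ v : ℕ, s = (Rn (n + 1)).neighborSet v := fun s hs => hts hs
  choose! f hf using hch
  set S : Finset ℕ := htf.toFinset.image f with hS
  have hfS : ∀ s ∈ t, f s ∈ S := fun s hs =>
    Finset.mem_image.2 ⟨s, htf.mem_toFinset.2 hs, rfl⟩
  set B : ℕ := S.sup id with hB
  have hBlt : ∀ x ∈ S, x ≤ B := fun x hx => Finset.le_sup (f := id) hx
  have h2 : 2 ≤ 2 ^ (n + 1) := Nat.one_lt_two_pow (by omega)
  -- pick M with 2^(n+1) ∣ M+1 and, if 0 ∈ S, 2^(n+2) ∤ M+1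
  by_cases h0 : 0 ∈ S
  · -- M + 1 = 2^(n+1) * (2B+3), odd multiple of 2^(n+1)
    set M : ℕ := 2 ^ (n + 1) * (2 * B + 3) - 1 with hM
    have hM1 : M + 1 = 2 ^ (n + 1) * (2 * B + 3) := by
      have : 0 < 2 ^ (n + 1) * (2 * B + 3) := by positivity
      omega
    have hMgt : ∀ x ∈ S ∪ (∅ : Finset ℕ), x < M := by
      intro x hx
      rw [Finset.union_empty] at hx
      have hx1 := hBlt x hx
      have hx2 : 2 * (2 * B + 3) ≤ 2 ^ (n + 1) * (2 * B + 3) := Nat.mul_le_mul_right _ h2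
      omega
    have hdvd : 2 ^ (n + 1) ∣ M + 1 := hM1 ▸ dvd_mul_right _ _
    have hndvd : ¬ (2 ^ (n + 2) ∣ M + 1) := by
      rintro ⟨c, hc⟩
      rw [hM1] at hc
      have h' : 2 ^ (n + 1) * (2 * B + 3) = 2 ^ (n + 1) * (2 * c) := by
        rw [hc]; ring
      have := Nat.eq_of_mul_eq_mul_left (show 0 < 2 ^ (n + 1) by positivity) h'
      omega
    obtain ⟨z, hlog, hzpos, _, _, hadj, _⟩ := key (n + 1) S ∅ (Finset.disjoint_empty_right _)
      M hMgt (fun _ => hndvd) (by simp)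
    have hzint : z ∈ ⋂₀ t := by
      rintro s hs
      rw [hf s hs]
      exact ((Rn (n + 1)).adj_symm (hadj _ (hfS s hs)))
    have := hsub hzint
    rw [SimpleGraph.mem_neighborSet] at this
    obtain ⟨hne, h⟩ := this
    rcases h with ⟨h, _⟩ | ⟨_, _, hd⟩ | ⟨h, _⟩
    · omega
    · rw [hlog] at hd; exact hd hdvd
    · omega
  · -- use W = {0}
    set M : ℕ := 2 ^ (n + 2) * (B + 1) - 1 with hM
    have hM1 : M + 1 = 2 ^ (n + 2) * (B + 1) := by
      have : 0 < 2 ^ (n + 2) * (B + 1) := by positivity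
      omega
    have h4 : 2 ≤ 2 ^ (n + 2) := Nat.one_lt_two_pow (by omega)
    have hMgt : ∀ x ∈ S ∪ ({0} : Finset ℕ), x < M := by
      intro x hx
      have hx2 : 2 * (B + 1) ≤ 2 ^ (n + 2) * (B + 1) := Nat.mul_le_mul_right _ h4
      rcases Finset.mem_union.1 hx with hx | hx
      · have hx1 := hBlt x hx
        omega
      · have : x = 0 := Finset.mem_singleton.1 hx
        omega
    have hdisj : Disjoint S ({0} : Finset ℕ) := by
      rw [Finset.disjoint_singleton_right]; exact h0
    obtain ⟨z, hlog, hzpos, _, _, hadj, _⟩ := key (n + 1) S {0} hdisj M hMgt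
      (fun hc => absurd hc h0) (fun _ => hM1 ▸ dvd_mul_right _ _)
    have hdvd : 2 ^ (n + 1) ∣ M + 1 :=
      dvd_trans (pow_dvd_pow 2 (by omega)) (hM1 ▸ dvd_mul_right _ _)
    have hzint : z ∈ ⋂₀ t := by
      rintro s hs
      rw [hf s hs]
      exact ((Rn (n + 1)).adj_symm (hadj _ (hfS s hs)))
    have := hsub hzint
    rw [SimpleGraph.mem_neighborSet] at this
    obtain ⟨hne, h⟩ := this
    rcases h with ⟨h, _⟩ | ⟨_, _, hd⟩ | ⟨h, _⟩
    · omega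
    · rw [hlog] at hd; exact hd hdvd
    · omega

/-- There is an infinite increasing chain of copies of the Rado graph on a common
countably infinite vertex set whose neighbourhood filters form a strictly
decreasing chain. -/
theorem exists_chain_of_rado_nbhdFilters :
    ∃ (V : Type) (_ : Countable V) (_ : Infinite V) (R : ℕ → SimpleGraph V),
      (∀ n : ℕ, R n ≤ R (n + 1)) ∧
      (∀ n : ℕ, ExtensionProperty (R n)) ∧
      (∀ n : ℕ, (∀ s : Set V, s ∈ nbhdFilter (R (n + 1)) → s ∈ nbhdFilter (R n)) ∧
        nbhdFilter (R (n + 1)) ≠ nbhdFilter (R n)) := by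
  refine ⟨ℕ, inferInstance, inferInstance, Rn, rn_mono, rn_ext, fun n => ⟨nbhd_anti (rn_mono n), ?_⟩⟩
  intro heq
  have hmem : (Rn n).neighborSet 0 ∈ nbhdFilter (Rn n) :=
    Filter.mem_generate_of_mem ⟨0, rfl⟩
  exact not_mem_new n ((Filter.ext_iff.1 heq ((Rn n).neighborSet 0)).2 hmem)
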